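/- Let R be a finite commutative Frobenius ring of characteristic 2 and let G be a finite abelian group of order n and exponent 2, with a fixed enumeration of its elements identifying indices with Z/nZ. Let v1, v2 ∈ RG and let A be an n×n reverse circulant matrix over R. If σ(v1) and σ(v2) are circulant matrices (with respect to the Z/nZ indexing) and σ((v1+v2)²) + A² = I_n, then the code C_σ generated by the rows of M(σ) is a self-dual code of length 4n. -/

import Mathlib

open Matrix

/-- The dual of a code (submodule of `ι → R`) with respect to the standard bilinear form. -/
def dualCode {R : Type*} [CommRing R] {ι : Type*} [Fintype ι]
    (C : Submodule R (ι → R)) : Submodule R (ι → R) where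
  carrier := {x | ∀ c ∈ C, ∑ i, x i * c i = 0}
  add_mem' := by
    intro a b ha hb c hc
    simp only [Set.mem_setOf_eq] at ha hb ⊢
    simp [Pi.add_apply, add_mul, Finset.sum_add_distrib, ha c hc, hb c hc]
  zero_mem' := by
    intro c hc
    simp
  smul_mem' := by
    intro r a ha c hc
    simp only [Set.mem_setOf_eq] at ha ⊢
    simp [Pi.smul_apply, smul_eq_mul, mul_assoc, ← Finset.mul_sum, ha c hc]

/-- A code is self-dual if it equals its dual. -/
def IsSelfDual {R : Type*} [CommRing R] {ι : Type*} [Fintype ι]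
    (C : Submodule R (ι → R)) : Prop :=
  C = dualCode C

/-- The code generated by the rows of a matrix. -/
def rowSpan {R : Type*} [CommRing R] {κ ι : Type*} (M : Matrix κ ι R) :
    Submodule R (ι → R) :=
  Submodule.span R (Set.range M)

/-- The matrix `σ(v)` of a group ring element `v` with respect to a fixed enumeration `e`
of the group elements: its `(i,j)` entry is the coefficient of `v` at `(e i)⁻¹ * (e j)`. -/
def sigma {R : Type*} [CommRing R] {G : Type*} [Group G] {ι : Type*}
    (e : ι ≃ G) (v : MonoidAlgebra R G) : Matrix ι ι R :=
  Matrix.of fun i j => v.coeff ((e i)⁻¹ * e j)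

/-- The canonical involution `v ↦ v* = ∑ α_g g⁻¹` on a group ring. -/
def invol {R : Type*} [CommRing R] {G : Type*} [Group G]
    (v : MonoidAlgebra R G) : MonoidAlgebra R G :=
  MonoidAlgebra.ofCoeff (Finsupp.equivMapDomain (Equiv.inv G) v.coeff)

/-- A matrix indexed by `ZMod n` is reverse circulant if its `(i,j)` entry
depends only on `i + j`. -/
def IsRevCirculant {R : Type*} {n : ℕ} (A : Matrix (ZMod n) (ZMod n) R) : Prop :=
  ∃ a : ZMod n → R, ∀ i j, A i j = a (i + j)

/-- A matrix indexed by `ZMod n` is circulant if its `(i,j)` entry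
depends only on `j - i`. -/
def IsCirculant {R : Type*} {n : ℕ} (A : Matrix (ZMod n) (ZMod n) R) : Prop :=
  ∃ a : ZMod n → R, ∀ i j, A i j = a (j - i)

section Aux

variable {R : Type*} [CommRing R] {G : Type*} [Group G] [Fintype G] {n : ℕ} [NeZero n]

lemma sigma_apply (e : ZMod n ≃ G) (v : MonoidAlgebra R G) (i j : ZMod n) :
    sigma e v i j = v.coeff ((e i)⁻¹ * e j) := rfl

lemma sigma_add (e : ZMod n ≃ G) (v w : MonoidAlgebra R G) :
    sigma e (v + w) = sigma e v + sigma e w := by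
  ext i j; simp [sigma_apply, MonoidAlgebra.coeff_add]

lemma sigma_mul (e : ZMod n ≃ G) (v w : MonoidAlgebra R G) :
    sigma e (v * w) = sigma e v * sigma e w := by
  ext i j
  rw [Matrix.mul_apply, sigma_apply, MonoidAlgebra.coeff_mul_apply_left, Finsupp.sum_fintype]
  · refine (Fintype.sum_equiv (e.trans (Equiv.mulLeft ((e i)⁻¹))) _ _ fun k => ?_).symm
    simp only [sigma_apply, Equiv.trans_apply, Equiv.coe_mulLeft]
    have hk : ((e i)⁻¹ * e k)⁻¹ * ((e i)⁻¹ * e j) = (e k)⁻¹ * e j := by group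
    rw [hk]
  · exact fun a => zero_mul _

lemma sigma_transpose {G : Type*} [CommGroup G] [Fintype G] (hexp : ∀ g : G, g ^ 2 = 1)
    (e : ZMod n ≃ G) (v : MonoidAlgebra R G) :
    (sigma e v)ᵀ = sigma e v := by
  have hinv : ∀ g : G, g⁻¹ = g := fun g => by
    rw [inv_eq_iff_mul_eq_one, ← pow_two]; exact hexp g
  ext i j
  simp only [Matrix.transpose_apply, sigma_apply, hinv]
  rw [mul_comm]

lemma circulant_comm {b c : ZMod n → R} (B C : Matrix (ZMod n) (ZMod n) R)
    (hB : ∀ i j, B i j = b (j - i)) (hC : ∀ i j, C i j = c (j - i)) :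
    B * C = C * B := by
  ext i j
  rw [Matrix.mul_apply, Matrix.mul_apply]
  refine Fintype.sum_equiv (Equiv.subLeft (i + j)) _ _ fun k => ?_
  rw [hB, hC, hC, hB, Equiv.subLeft_apply]
  have h1 : i + j - k - i = j - k := by ring
  have h2 : j - (i + j - k) = k - i := by ring
  rw [h1, h2, mul_comm]

lemma circulant_revCirculant_comm {b a : ZMod n → R} (B A : Matrix (ZMod n) (ZMod n) R)
    (hB : ∀ i j, B i j = b (j - i)) (hb : ∀ d, b (-d) = b d)
    (hA : ∀ i j, A i j = a (i + j)) :
    B * A = A * B := by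
  ext i j
  rw [Matrix.mul_apply, Matrix.mul_apply]
  refine Fintype.sum_equiv (Equiv.addRight (j - i)) _ _ fun k => ?_
  rw [hB, hA, hA, hB, Equiv.coe_addRight]
  have h1 : i + (k + (j - i)) = k + j := by ring
  have h2 : j - (k + (j - i)) = -(k - i) := by ring
  rw [h1, h2, hb, mul_comm]

end Aux

/-- Lemma 2.6: for a finite abelian group of exponent 2, if `σ(v₁)`, `σ(v₂)` are
circulant and `σ((v₁+v₂)²) + A² = I`, then `C_σ` is a self-dual code of length `4n`. -/
theorem selfDual_of_exponent_two_group
    {R : Type*} [CommRing R] [Fintype R] [CharP R 2]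
    (hFrob : Module.Injective R R)
    {n : ℕ} [NeZero n] {G : Type*} [CommGroup G] [Fintype G]
    (hexp : ∀ g : G, g ^ 2 = 1) (e : ZMod n ≃ G)
    (v1 v2 : MonoidAlgebra R G) (A : Matrix (ZMod n) (ZMod n) R)
    (hA : IsRevCirculant A)
    (h1 : IsCirculant (sigma e v1)) (h2 : IsCirculant (sigma e v2))
    (h3 : sigma e ((v1 + v2) ^ 2) + A ^ 2 = 1) :
    IsSelfDual (rowSpan (Matrix.fromCols (1 : Matrix (ZMod n ⊕ ZMod n) (ZMod n ⊕ ZMod n) R)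
        (Matrix.fromBlocks (sigma e v1) (sigma e v2 + A) (sigma e v2 + A) (sigma e v1)))) := by
  classical
  -- notation
  set B : Matrix (ZMod n) (ZMod n) R := sigma e v1 with hBdef
  set C : Matrix (ZMod n) (ZMod n) R := sigma e v2 + A with hCdef
  set X : Matrix (ZMod n ⊕ ZMod n) (ZMod n ⊕ ZMod n) R := Matrix.fromBlocks B C C B with hXdef
  set M := Matrix.fromCols (1 : Matrix (ZMod n ⊕ ZMod n) (ZMod n ⊕ ZMod n) R) X with hMdef
  -- char two facts
  have haddM : ∀ {ι κ : Type} (x : Matrix ι κ R), x + x = 0 := by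
    intro ι κ x
    ext i j
    exact CharTwo.add_self_eq_zero (x i j)
  have key : ∀ x y : Matrix (ZMod n) (ZMod n) R, x * y = y * x →
      (x + y) * (x + y) = x * x + y * y := by
    intro x y hxy
    calc (x + y) * (x + y) = x * x + (x * y + y * x) + y * y := by noncomm_ring
      _ = x * x + y * y := by rw [hxy, haddM, add_zero]
  -- symmetry facts
  obtain ⟨a, ha⟩ := hA
  obtain ⟨b1, hb1⟩ := h1
  obtain ⟨b2, hb2⟩ := h2
  have hAt : Aᵀ = A := by
    ext i j; rw [Matrix.transpose_apply, ha, ha, add_comm]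
  have hBt : Bᵀ = B := sigma_transpose hexp e v1
  have hs2t : (sigma e v2)ᵀ = sigma e v2 := sigma_transpose hexp e v2
  have hCt : Cᵀ = C := by rw [hCdef, Matrix.transpose_add, hs2t, hAt]
  have hb1even : ∀ d : ZMod n, b1 (-d) = b1 d := by
    intro d
    have := Matrix.ext_iff.mpr hBt d 0
    rw [Matrix.transpose_apply, hb1, hb1, zero_sub, sub_zero] at this
    exact this.symm
  have hb2even : ∀ d : ZMod n, b2 (-d) = b2 d := by
    intro d
    have := Matrix.ext_iff.mpr hs2t d 0
    rw [Matrix.transpose_apply, hb2, hb2, zero_sub, sub_zero] at this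
    exact this.symm
  -- commutation facts
  have hB12 : B * sigma e v2 = sigma e v2 * B := circulant_comm _ _ hb1 hb2
  have hBA : B * A = A * B := circulant_revCirculant_comm _ _ hb1 hb1even ha
  have h2A : sigma e v2 * A = A * sigma e v2 :=
    circulant_revCirculant_comm _ _ hb2 hb2even ha
  have hBC : B * C = C * B := by
    rw [hCdef, Matrix.mul_add, Matrix.add_mul, hB12, hBA]
  -- B*B + C*C = 1
  have hsq : B * B + C * C = 1 := by
    have hCsq : C * C = sigma e v2 * sigma e v2 + A * A := by
      rw [hCdef]; exact key _ _ h2A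
    have hσ : sigma e ((v1 + v2) ^ 2) = B * B + sigma e v2 * sigma e v2 := by
      rw [pow_two, sigma_mul, sigma_add]
      exact key _ _ hB12
    calc B * B + C * C = sigma e ((v1 + v2) ^ 2) + A ^ 2 := by
          rw [hσ, hCsq, pow_two]; abel
      _ = 1 := h3
  -- X is symmetric and X * X = 1
  have hXt : Xᵀ = X := by
    rw [hXdef, Matrix.fromBlocks_transpose, hBt, hCt]
  have hXX : X * X = 1 := by
    rw [hXdef, Matrix.fromBlocks_multiply]
    have h0 : B * C + C * B = 0 := by rw [hBC]; exact haddM _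
    have h0' : C * B + B * C = 0 := by rw [add_comm]; exact h0
    have hsq' : C * C + B * B = 1 := by rw [add_comm]; exact hsq
    rw [h0, h0', hsq, hsq', Matrix.fromBlocks_one]
  -- M * Mᵀ = 0
  have hMMt : M * Mᵀ = 0 := by
    rw [hMdef, Matrix.transpose_fromCols, Matrix.fromCols_mul_fromRows,
      Matrix.transpose_one, Matrix.mul_one, hXt, hXX]
    funext i j
    exact CharTwo.add_self_eq_zero _
  -- self-duality
  apply le_antisymm
  · -- rowSpan ≤ dual
    rw [rowSpan]
    rw [Submodule.span_le]
    rintro _ ⟨i, rfl⟩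
    intro d hd
    induction hd using Submodule.span_induction with
    | mem y hy =>
      obtain ⟨k, rfl⟩ := hy
      have := Matrix.ext_iff.mpr hMMt i k
      rw [Matrix.mul_apply] at this
      simpa [Matrix.transpose_apply] using this
    | zero => simp
    | add y z _ _ hy hz => simp [mul_add, Finset.sum_add_distrib, hy, hz]
    | smul r y _ hy =>
      have : ∑ k, M i k * (r • y) k = r * ∑ k, M i k * y k := by
        rw [Finset.mul_sum]
        exact Finset.sum_congr rfl fun k _ => by
          simp [mul_left_comm]
      rw [this, hy, mul_zero]
  · -- dual ≤ rowSpan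
    intro x hx
    have hx' : ∀ c ∈ rowSpan M, ∑ i, x i * c i = 0 := hx
    have hMx : M *ᵥ x = 0 := by
      funext i
      have h := hx' (M i) (Submodule.subset_span ⟨i, rfl⟩)
      show ∑ k, M i k * x k = 0
      rw [← h]
      exact Finset.sum_congr rfl fun k _ => mul_comm _ _
    set a : (ZMod n ⊕ ZMod n) → R := x ∘ Sum.inl with hadef
    set b : (ZMod n ⊕ ZMod n) → R := x ∘ Sum.inr with hbdef
    have hxe : x = Sum.elim a b := by funext k; cases k <;> rfl
    rw [hxe] at hMx
    rw [hMdef, Matrix.fromCols_mulVec_sumElim, Matrix.one_mulVec] at hMx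
    have hXb : X *ᵥ b = a := by
      have : a + X *ᵥ b + a = a := by rw [hMx, zero_add]
      rw [← this]
      funext i
      simp only [Pi.add_apply]
      rw [add_comm (a i) ((X *ᵥ b) i), add_assoc, CharTwo.add_self_eq_zero, add_zero]
    have hXa : X *ᵥ a = b := by
      rw [← hXb, Matrix.mulVec_mulVec, hXX, Matrix.one_mulVec]
    have : x = a ᵥ* M := by
      rw [hMdef, Matrix.vecMul_fromCols, Matrix.vecMul_one, hxe]
      rw [← hXt, Matrix.vecMul_transpose, hXa]
    rw [this]
    rw [rowSpan, show Set.range M = Set.range M.row from rfl, ← range_vecMulLinear]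
    exact ⟨a, rfl⟩
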